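/- Let M be an o-minimal structure and let S be a definable family of nonempty intervals in M (each with endpoints in M ∪ {−∞,+∞}). Let k ≥ 1 be the maximum cardinality of a pairwise disjoint subfamily of S. Then S has a tame transversal of size k: S can be covered by k subfamilies, each of which extends to a definable type. -/

import Mathlib

open FirstOrder Set

/-- `M` is an o-minimal `L`-structure: a densely linearly ordered structure without endpoints,
whose order is `∅`-definable, and in which every definable (with parameters) subset of `M`
is a finite union of points and open intervals with endpoints in `M ∪ {±∞}`. -/
def IsOMinimal (L : FirstOrder.Language) (M : Type*) [L.Structure M] [LinearOrder M] : Prop :=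
  Nonempty M ∧ DenselyOrdered M ∧ NoMinOrder M ∧ NoMaxOrder M ∧
  Set.Definable (∅ : Set M) L {v : Fin 2 → M | v 0 < v 1} ∧
  ∀ s : Set M, Set.Definable₁ (Set.univ : Set M) L s →
    ∃ F : Finset (Set M), s = ⋃₀ (F : Set (Set M)) ∧
      ∀ t ∈ F, (∃ a : M, t = {a}) ∨ (∃ a b : M, t = Set.Ioo a b) ∨
        (∃ a : M, t = Set.Ioi a) ∨ (∃ a : M, t = Set.Iio a) ∨ t = Set.univ

/-- The fiber over `u` of a set `D ⊆ M^{m+n}`, i.e. the set `φ(u, M^n)`. -/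
def famFiber {M : Type*} {m n : ℕ} (D : Set (Fin m ⊕ Fin n → M)) (u : Fin m → M) :
    Set (Fin n → M) :=
  {v | Sum.elim u v ∈ D}

/-- An `A`-definable family of subsets of `M^n`: the family of fibers `φ(u, M^n)` for `u`
ranging over an `A`-definable index set `Ω`, where `φ` is `A`-definable. -/
def IsDefFamily (L : FirstOrder.Language) {M : Type*} [L.Structure M] (A : Set M) (n : ℕ)
    (S : Set (Set (Fin n → M))) : Prop :=
  ∃ (m : ℕ) (Ω : Set (Fin m → M)) (D : Set (Fin m ⊕ Fin n → M)),
    Set.Definable A L Ω ∧ Set.Definable A L D ∧ S = famFiber D '' Ω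

/-- A family of sets is downward directed: it does not contain `∅` and any two members
contain a common member. -/
def DirectedFam {α : Type*} (S : Set (Set α)) : Prop :=
  ∅ ∉ S ∧ ∀ X ∈ S, ∀ Y ∈ S, ∃ Z ∈ S, Z ⊆ X ∩ Y

/-- `S` is finer than `F`: every member of `F` contains a member of `S`. -/
def FinerThan {α : Type*} (S F : Set (Set α)) : Prop :=
  ∀ X ∈ F, ∃ Y ∈ S, Y ⊆ X

/-- A (complete) `n`-type over `M`: an ultrafilter on the Boolean algebra of definable
subsets of `M^n`. -/
def IsTypeOn (L : FirstOrder.Language) {M : Type*} [L.Structure M] (n : ℕ)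
    (p : Set (Set (Fin n → M))) : Prop :=
  (∀ X ∈ p, Set.Definable (Set.univ : Set M) L X) ∧
  ∅ ∉ p ∧
  (∀ X ∈ p, ∀ Y ∈ p, X ∩ Y ∈ p) ∧
  (∀ X ∈ p, ∀ Y : Set (Fin n → M), Set.Definable (Set.univ : Set M) L Y → X ⊆ Y → Y ∈ p) ∧
  (∀ X : Set (Fin n → M), Set.Definable (Set.univ : Set M) L X → X ∈ p ∨ Xᶜ ∈ p)

/-- A type `p` is `A`-definable if for every `∅`-definable `D ⊆ M^{m+n}` the set of
parameters `u` with `φ(u, M^n) ∈ p` is `A`-definable. -/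
def IsDefTypeOver (L : FirstOrder.Language) {M : Type*} [L.Structure M] (A : Set M) (n : ℕ)
    (p : Set (Set (Fin n → M))) : Prop :=
  ∀ (m : ℕ) (D : Set (Fin m ⊕ Fin n → M)), Set.Definable (∅ : Set M) L D →
    Set.Definable A L {u : Fin m → M | famFiber D u ∈ p}

/-- A family `F` is complete for a family `X` if each member of `X` either contains a member
of `F` or is disjoint from one. -/
def CompleteFor {α : Type*} (F X : Set (Set α)) : Prop :=
  ∀ Y ∈ X, ∃ Z ∈ F, Z ⊆ Y ∨ Z ∩ Y = ∅

/-- A family of subsets of `M^n` is complete if it decides every definable set. -/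
def IsCompleteFam (L : FirstOrder.Language) {M : Type*} [L.Structure M] (n : ℕ)
    (S : Set (Set (Fin n → M))) : Prop :=
  ∀ X : Set (Fin n → M), Set.Definable (Set.univ : Set M) L X → ∃ Z ∈ S, Z ⊆ X ∨ Z ∩ X = ∅

/-- `B` is a basis for the type `p`: a downward directed subfamily generating `p`. -/
def IsBasisOfType {α : Type*} (B p : Set (Set α)) : Prop :=
  B ⊆ p ∧ DirectedFam B ∧ ∀ Y ∈ p, ∃ Z ∈ B, Z ⊆ Y

/-- `p` has an `A`-definable basis. -/
def HasDefBasis (L : FirstOrder.Language) {M : Type*} [L.Structure M] (A : Set M) (n : ℕ)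
    (p : Set (Set (Fin n → M))) : Prop :=
  ∃ B, IsDefFamily L A n B ∧ IsBasisOfType B p

/-- `S` has a finite tame transversal: it is covered by finitely many subfamilies, each of
which extends to a definable type. -/
def HasFTT (L : FirstOrder.Language) {M : Type*} [L.Structure M] (n : ℕ)
    (S : Set (Set (Fin n → M))) : Prop :=
  ∃ (N : ℕ) (p : Fin N → Set (Set (Fin n → M))),
    (∀ i, IsTypeOn L n (p i) ∧ IsDefTypeOver L (Set.univ : Set M) n (p i)) ∧
    ∀ X ∈ S, ∃ i, X ∈ p i

/-- The `(m,n)`-property: among any `m` members of the family, some `n` have nonempty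
intersection. -/
def HasMNProperty {α : Type*} (S : Set (Set α)) (m n : ℕ) : Prop :=
  ∀ F : Finset (Set α), ↑F ⊆ S → F.card = m →
    ∃ G ⊆ F, G.card = n ∧ (⋂₀ (G : Set (Set α))).Nonempty

/-- The fiber over `u` of `D ⊆ M^{m+1}`, as a subset of `M`. -/
def famFiber₁ {M : Type*} {m : ℕ} (D : Set (Fin m ⊕ Fin 1 → M)) (u : Fin m → M) : Set M :=
  {x | Sum.elim u (fun _ => x) ∈ D}

/-- An `A`-definable family of subsets of `M`. -/
def IsDefFamily₁ (L : FirstOrder.Language) {M : Type*} [L.Structure M] (A : Set M)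
    (S : Set (Set M)) : Prop :=
  ∃ (m : ℕ) (Ω : Set (Fin m → M)) (D : Set (Fin m ⊕ Fin 1 → M)),
    Set.Definable A L Ω ∧ Set.Definable A L D ∧ S = famFiber₁ D '' Ω

/-- A (complete) `1`-type over `M`, as an ultrafilter on the Boolean algebra of definable
subsets of `M`. -/
def IsTypeOn₁ (L : FirstOrder.Language) {M : Type*} [L.Structure M] (p : Set (Set M)) : Prop :=
  (∀ X ∈ p, Set.Definable₁ (Set.univ : Set M) L X) ∧
  ∅ ∉ p ∧
  (∀ X ∈ p, ∀ Y ∈ p, X ∩ Y ∈ p) ∧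
  (∀ X ∈ p, ∀ Y : Set M, Set.Definable₁ (Set.univ : Set M) L Y → X ⊆ Y → Y ∈ p) ∧
  (∀ X : Set M, Set.Definable₁ (Set.univ : Set M) L X → X ∈ p ∨ Xᶜ ∈ p)

/-- A `1`-type is `A`-definable if the parameter sets of its restrictions to `∅`-definable
families are `A`-definable. -/
def IsDefTypeOver₁ (L : FirstOrder.Language) {M : Type*} [L.Structure M] (A : Set M)
    (p : Set (Set M)) : Prop :=
  ∀ (m : ℕ) (D : Set (Fin m ⊕ Fin 1 → M)), Set.Definable (∅ : Set M) L D →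
    Set.Definable A L {u : Fin m → M | famFiber₁ D u ∈ p}

/-- A point or an interval in a linear order, with endpoints in `M ∪ {±∞}`. -/
def IsPointOrInterval {M : Type*} [LinearOrder M] (s : Set M) : Prop :=
  (∃ a : M, s = {a}) ∨ (∃ a b : M, s = Set.Icc a b) ∨ (∃ a b : M, s = Set.Ico a b) ∨
  (∃ a b : M, s = Set.Ioc a b) ∨ (∃ a b : M, s = Set.Ioo a b) ∨ (∃ a : M, s = Set.Ici a) ∨
  (∃ a : M, s = Set.Iic a) ∨ (∃ a : M, s = Set.Ioi a) ∨ (∃ a : M, s = Set.Iio a) ∨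
  s = Set.univ

namespace St11
open FirstOrder FirstOrder.Language Set

variable {L : FirstOrder.Language} {M : Type*} [L.Structure M] [LinearOrder M]

/-- Substitution: each coordinate of `α` is either a fixed constant or a coordinate of `β`. -/
theorem definable_subst {α β : Type*} {s : Set (α → M)}
    (hs : Set.Definable (Set.univ : Set M) L s) (σ : α → M ⊕ β) :
    Set.Definable (Set.univ : Set M) L {x : β → M | (fun i => Sum.elim id x (σ i)) ∈ s} := by
  obtain ⟨φ, rfl⟩ := hs
  refine ⟨φ.subst (fun i => Sum.elim (fun c => (L.con ⟨c, mem_univ c⟩).term) Term.var (σ i)), ?_⟩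
  ext x
  simp only [mem_setOf_eq, Formula.Realize, BoundedFormula.realize_subst]
  have hv : (fun i => Term.realize x
      (Sum.elim (fun c => ((L.con ⟨c, mem_univ c⟩).term : L[[(Set.univ : Set M)]].Term β))
        Term.var (σ i))) = fun i => Sum.elim id x (σ i) := by
    funext i; cases h : σ i <;> simp [h, Term.realize_con]
  rw [hv]

theorem definable_EX {α β : Type*} [Finite α] [Finite β] {s : Set (α ⊕ β → M)}
    (hs : Set.Definable (Set.univ : Set M) L s) :
    Set.Definable (Set.univ : Set M) L {u : α → M | ∃ v : β → M, Sum.elim u v ∈ s} := by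
  have h := hs.image_comp Sum.inl
  convert h using 1
  ext u
  simp only [mem_setOf_eq, mem_image]
  constructor
  · rintro ⟨v, hv⟩; exact ⟨Sum.elim u v, hv, rfl⟩
  · rintro ⟨g, hg, rfl⟩
    exact ⟨g ∘ Sum.inr, by rwa [Sum.elim_comp_inl_inr]⟩

theorem definable_ALL {α β : Type*} [Finite α] [Finite β] {s : Set (α ⊕ β → M)}
    (hs : Set.Definable (Set.univ : Set M) L s) :
    Set.Definable (Set.univ : Set M) L {u : α → M | ∀ v : β → M, Sum.elim u v ∈ s} := by
  have h := (definable_EX (hs.compl)).compl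
  convert h using 1
  ext u
  simp [mem_setOf_eq, not_exists]

omit [LinearOrder M] in
theorem funone (v : Fin 1 → M) : (fun _ : Fin 1 => v 0) = v :=
  funext fun i => by rw [Subsingleton.elim (0 : Fin 1) i]

omit [LinearOrder M] in
theorem elim_const {m : ℕ} (u : Fin m → M) (v : Fin 1 → M) :
    Sum.elim u (fun _ : Fin 1 => v 0) = Sum.elim u v := by rw [funone v]

section Order

variable (hlt : Set.Definable (Set.univ : Set M) L {v : Fin 2 → M | v 0 < v 1})
include hlt

theorem dlt {α : Type*} (i j : α) :
    Set.Definable (Set.univ : Set M) L {x : α → M | x i < x j} :=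
  definable_subst hlt (![Sum.inr i, Sum.inr j] : Fin 2 → M ⊕ α)

theorem dltc {α : Type*} (i : α) (a : M) :
    Set.Definable (Set.univ : Set M) L {x : α → M | x i < a} :=
  definable_subst hlt (![Sum.inr i, Sum.inl a] : Fin 2 → M ⊕ α)

theorem dgtc {α : Type*} (i : α) (a : M) :
    Set.Definable (Set.univ : Set M) L {x : α → M | a < x i} :=
  definable_subst hlt (![Sum.inl a, Sum.inr i] : Fin 2 → M ⊕ α)

end Order

section Picks

variable {m : ℕ} {D : Set (Fin m ⊕ Fin 1 → M)}
  (hlt : Set.Definable (Set.univ : Set M) L {v : Fin 2 → M | v 0 < v 1})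
  (hD : Set.Definable (Set.univ : Set M) L D)

omit hlt in
include hD in
/-- Fibers of a definable set are definable. -/
theorem fiber_definable (u : Fin m → M) :
    Set.Definable₁ (Set.univ : Set M) L (famFiber₁ D u) := by
  show Set.Definable (Set.univ : Set M) L {x : Fin 1 → M | x 0 ∈ famFiber₁ D u}
  have h := definable_subst hD
    (Sum.elim (fun i => Sum.inl (u i)) (fun _ => Sum.inr (0 : Fin 1)) : Fin m ⊕ Fin 1 → M ⊕ Fin 1)
  convert h using 1
  ext x
  simp only [mem_setOf_eq, famFiber₁]
  have : (fun i => Sum.elim id x ((Sum.elim (fun i => Sum.inl (u i))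
      (fun _ => Sum.inr (0 : Fin 1)) : Fin m ⊕ Fin 1 → M ⊕ Fin 1) i)) =
      Sum.elim u (fun _ : Fin 1 => x 0) := by
    funext i; cases i <;> rfl
  rw [this]

include hD in
omit hlt in
/-- The lifted copy of `D` on `(Fin m ⊕ Fin 1) ⊕ Fin 1`. -/
theorem dliftD : Set.Definable (Set.univ : Set M) L
    {z : (Fin m ⊕ Fin 1) ⊕ Fin 1 → M |
      Sum.elim (fun i => z (Sum.inl (Sum.inl i))) (fun j => z (Sum.inr j)) ∈ D} := by
  have h := definable_subst hD
    (Sum.elim (fun i => Sum.inr (Sum.inl (Sum.inl i))) (fun j => Sum.inr (Sum.inr j)) :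
      Fin m ⊕ Fin 1 → M ⊕ ((Fin m ⊕ Fin 1) ⊕ Fin 1))
  convert h using 1
  ext z
  simp only [mem_setOf_eq]
  have : (fun i => Sum.elim id z ((Sum.elim (fun i => Sum.inr (Sum.inl (Sum.inl i)))
      (fun j => Sum.inr (Sum.inr j)) : Fin m ⊕ Fin 1 → M ⊕ ((Fin m ⊕ Fin 1) ⊕ Fin 1)) i)) =
      Sum.elim (fun i => z (Sum.inl (Sum.inl i))) (fun j => z (Sum.inr j)) := by
    funext i; cases i <;> rfl
  rw [this]

include hlt hD

omit hlt in
theorem pickPt (a : M) : Set.Definable (Set.univ : Set M) L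
    {u : Fin m → M | a ∈ famFiber₁ D u} := by
  have h := definable_subst hD
    (Sum.elim (fun i => Sum.inr i) (fun _ => Sum.inl a) : Fin m ⊕ Fin 1 → M ⊕ Fin m)
  convert h using 1
  ext u
  simp only [mem_setOf_eq, famFiber₁]
  have : (fun i => Sum.elim id u ((Sum.elim (fun i => Sum.inr i)
      (fun _ => Sum.inl a) : Fin m ⊕ Fin 1 → M ⊕ Fin m) i)) =
      Sum.elim u (fun _ : Fin 1 => a) := by
    funext i; cases i <;> rfl
  rw [this]

theorem pickLt (c : M) : Set.Definable (Set.univ : Set M) L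
    {u : Fin m → M | ∃ b, b < c ∧ Set.Ioo b c ⊆ famFiber₁ D u} := by
  have s1 : Set.Definable (Set.univ : Set M) L
      {z : (Fin m ⊕ Fin 1) ⊕ Fin 1 → M | z (Sum.inl (Sum.inr 0)) < z (Sum.inr 0)} :=
    dlt hlt _ _
  have s2 : Set.Definable (Set.univ : Set M) L
      {z : (Fin m ⊕ Fin 1) ⊕ Fin 1 → M | z (Sum.inr 0) < c} := dltc hlt _ _
  have s4 := (s1.compl.union s2.compl).union (dliftD hD)
  have s5 := definable_ALL (L := L) (M := M) s4
  have s6 := s5.inter (dltc hlt (Sum.inr 0 : Fin m ⊕ Fin 1) c)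
  have s7 := definable_EX (L := L) (M := M) s6
  convert s7 using 1
  ext u
  simp only [mem_setOf_eq, mem_union, mem_inter_iff, mem_compl_iff]
  constructor
  · rintro ⟨b, hb, hIoo⟩
    refine ⟨fun _ => b, fun v => ?_, by simpa using hb⟩
    simp only [mem_setOf_eq, Sum.elim_inl, Sum.elim_inr]
    by_cases h1 : b < v 0
    · by_cases h2 : v 0 < c
      · right
        have hx := hIoo ⟨h1, h2⟩
        rw [famFiber₁, mem_setOf_eq, elim_const u v] at hx
        exact hx
      · left; right; simpa using h2
    · left; left; simpa using h1
  · rintro ⟨v, hall, hb⟩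
    refine ⟨v 0, by simpa using hb, fun x hx => ?_⟩
    have h := hall (fun _ => x)
    simp only [mem_setOf_eq, Sum.elim_inl, Sum.elim_inr] at h
    rcases h with (h | h) | h
    · exact absurd hx.1 h
    · exact absurd hx.2 h
    · exact h

theorem pickGt (c : M) : Set.Definable (Set.univ : Set M) L
    {u : Fin m → M | ∃ b, c < b ∧ Set.Ioo c b ⊆ famFiber₁ D u} := by
  have s1 : Set.Definable (Set.univ : Set M) L
      {z : (Fin m ⊕ Fin 1) ⊕ Fin 1 → M | c < z (Sum.inr 0)} := dgtc hlt _ _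
  have s2 : Set.Definable (Set.univ : Set M) L
      {z : (Fin m ⊕ Fin 1) ⊕ Fin 1 → M | z (Sum.inr 0) < z (Sum.inl (Sum.inr 0))} :=
    dlt hlt _ _
  have s4 := (s1.compl.union s2.compl).union (dliftD hD)
  have s5 := definable_ALL (L := L) (M := M) s4
  have s6 := s5.inter (dgtc hlt (Sum.inr 0 : Fin m ⊕ Fin 1) c)
  have s7 := definable_EX (L := L) (M := M) s6
  convert s7 using 1
  ext u
  simp only [mem_setOf_eq, mem_union, mem_inter_iff, mem_compl_iff]
  constructor
  · rintro ⟨b, hb, hIoo⟩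
    refine ⟨fun _ => b, fun v => ?_, by simpa using hb⟩
    simp only [mem_setOf_eq, Sum.elim_inl, Sum.elim_inr]
    by_cases h1 : c < v 0
    · by_cases h2 : v 0 < b
      · right
        have hx := hIoo ⟨h1, h2⟩
        rw [famFiber₁, mem_setOf_eq, elim_const u v] at hx
        exact hx
      · left; right; simpa using h2
    · left; left; simpa using h1
  · rintro ⟨v, hall, hb⟩
    refine ⟨v 0, by simpa using hb, fun x hx => ?_⟩
    have h := hall (fun _ => x)
    simp only [mem_setOf_eq, Sum.elim_inl, Sum.elim_inr] at h
    rcases h with (h | h) | h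
    · exact absurd hx.1 h
    · exact absurd hx.2 h
    · exact h

theorem pickSup : Set.Definable (Set.univ : Set M) L
    {u : Fin m → M | ∃ b, Set.Ioi b ⊆ famFiber₁ D u} := by
  have s1 : Set.Definable (Set.univ : Set M) L
      {z : (Fin m ⊕ Fin 1) ⊕ Fin 1 → M | z (Sum.inl (Sum.inr 0)) < z (Sum.inr 0)} :=
    dlt hlt _ _
  have s4 := s1.compl.union (dliftD hD)
  have s5 := definable_ALL (L := L) (M := M) s4
  have s7 := definable_EX (L := L) (M := M) s5
  convert s7 using 1
  ext u
  simp only [mem_setOf_eq, mem_union, mem_compl_iff]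
  constructor
  · rintro ⟨b, hIoi⟩
    refine ⟨fun _ => b, fun v => ?_⟩
    simp only [mem_setOf_eq, Sum.elim_inl, Sum.elim_inr]
    by_cases h1 : b < v 0
    · right
      have hx := hIoi h1
      rw [famFiber₁, mem_setOf_eq, elim_const u v] at hx
      exact hx
    · left; simpa using h1
  · rintro ⟨v, hall⟩
    refine ⟨v 0, fun x hx => ?_⟩
    have h := hall (fun _ => x)
    simp only [mem_setOf_eq, Sum.elim_inl, Sum.elim_inr] at h
    rcases h with h | h
    · exact absurd hx h
    · exact h

theorem pickInf : Set.Definable (Set.univ : Set M) L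
    {u : Fin m → M | ∃ b, Set.Iio b ⊆ famFiber₁ D u} := by
  have s1 : Set.Definable (Set.univ : Set M) L
      {z : (Fin m ⊕ Fin 1) ⊕ Fin 1 → M | z (Sum.inr 0) < z (Sum.inl (Sum.inr 0))} :=
    dlt hlt _ _
  have s4 := s1.compl.union (dliftD hD)
  have s5 := definable_ALL (L := L) (M := M) s4
  have s7 := definable_EX (L := L) (M := M) s5
  convert s7 using 1
  ext u
  simp only [mem_setOf_eq, mem_union, mem_compl_iff]
  constructor
  · rintro ⟨b, hIio⟩
    refine ⟨fun _ => b, fun v => ?_⟩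
    simp only [mem_setOf_eq, Sum.elim_inl, Sum.elim_inr]
    by_cases h1 : v 0 < b
    · right
      have hx := hIio h1
      rw [famFiber₁, mem_setOf_eq, elim_const u v] at hx
      exact hx
    · left; simpa using h1
  · rintro ⟨v, hall⟩
    refine ⟨v 0, fun x hx => ?_⟩
    have h := hall (fun _ => x)
    simp only [mem_setOf_eq, Sum.elim_inl, Sum.elim_inr] at h
    rcases h with h | h
    · exact absurd hx h
    · exact h

end Picks

section RSets

variable {m : ℕ} {Ω : Set (Fin m → M)} {D : Set (Fin m ⊕ Fin 1 → M)}
  (hlt : Set.Definable (Set.univ : Set M) L {v : Fin 2 → M | v 0 < v 1})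
  (hΩ : Set.Definable (Set.univ : Set M) L Ω)
  (hD : Set.Definable (Set.univ : Set M) L D)
include hlt hΩ hD

omit hlt hΩ in
/-- The lifted copy of `D` on `(Fin 1 ⊕ Fin m) ⊕ Fin 1` (params at `inl ∘ inr`). -/
theorem dliftD' : Set.Definable (Set.univ : Set M) L
    {z : (Fin 1 ⊕ Fin m) ⊕ Fin 1 → M |
      Sum.elim (fun i => z (Sum.inl (Sum.inr i))) (fun j => z (Sum.inr j)) ∈ D} := by
  have h := definable_subst hD
    (Sum.elim (fun i => Sum.inr (Sum.inl (Sum.inr i))) (fun j => Sum.inr (Sum.inr j)) :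
      Fin m ⊕ Fin 1 → M ⊕ ((Fin 1 ⊕ Fin m) ⊕ Fin 1))
  convert h using 1
  ext z
  simp only [mem_setOf_eq]
  have : (fun i => Sum.elim id z ((Sum.elim (fun i => Sum.inr (Sum.inl (Sum.inr i)))
      (fun j => Sum.inr (Sum.inr j)) : Fin m ⊕ Fin 1 → M ⊕ ((Fin 1 ⊕ Fin m) ⊕ Fin 1)) i)) =
      Sum.elim (fun i => z (Sum.inl (Sum.inr i))) (fun j => z (Sum.inr j)) := by
    funext i; cases i <;> rfl
  rw [this]

theorem defR1 : Set.Definable (Set.univ : Set M) L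
    {w : Fin 1 → M | ∃ u ∈ Ω, famFiber₁ D u ⊆ Set.Iic (w 0)} := by
  have sΩ : Set.Definable (Set.univ : Set M) L
      {z : Fin 1 ⊕ Fin m → M | (fun i => z (Sum.inr i)) ∈ Ω} :=
    definable_subst hΩ (fun i => Sum.inr (Sum.inr i) : Fin m → M ⊕ (Fin 1 ⊕ Fin m))
  have sLT : Set.Definable (Set.univ : Set M) L
      {q : (Fin 1 ⊕ Fin m) ⊕ Fin 1 → M | q (Sum.inl (Sum.inl 0)) < q (Sum.inr 0)} :=
    dlt hlt _ _
  have s4 := (dliftD' hD).compl.union sLT.compl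
  have s5 := definable_ALL (L := L) (M := M) s4
  have s6 := sΩ.inter s5
  have s7 := definable_EX (L := L) (M := M) s6
  convert s7 using 1
  ext w
  simp only [mem_setOf_eq, mem_union, mem_inter_iff, mem_compl_iff]
  constructor
  · rintro ⟨u, hu, hsub⟩
    refine ⟨u, hu, fun v => ?_⟩
    simp only [mem_setOf_eq, Sum.elim_inl, Sum.elim_inr]
    by_cases hd : (Sum.elim (fun i => Sum.elim (Sum.elim w u) v (Sum.inl (Sum.inr i)))
        fun j => Sum.elim (Sum.elim w u) v (Sum.inr j)) ∈ D
    · right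
      have : v 0 ∈ famFiber₁ D u := by
        rw [famFiber₁, mem_setOf_eq, elim_const u v]
        exact hd
      exact not_lt.2 (hsub this)
    · left; exact hd
  · rintro ⟨u, ⟨hu, hall⟩⟩
    refine ⟨u, hu, fun x hx => ?_⟩
    have h := hall (fun _ => x)
    simp only [mem_setOf_eq, Sum.elim_inl, Sum.elim_inr] at h
    rcases h with h | h
    · exact absurd hx h
    · exact not_lt.1 h

theorem defR2 : Set.Definable (Set.univ : Set M) L
    {w : Fin 1 → M | ∃ u ∈ Ω, famFiber₁ D u ⊆ Set.Iio (w 0)} := by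
  have sΩ : Set.Definable (Set.univ : Set M) L
      {z : Fin 1 ⊕ Fin m → M | (fun i => z (Sum.inr i)) ∈ Ω} :=
    definable_subst hΩ (fun i => Sum.inr (Sum.inr i) : Fin m → M ⊕ (Fin 1 ⊕ Fin m))
  have sLT : Set.Definable (Set.univ : Set M) L
      {q : (Fin 1 ⊕ Fin m) ⊕ Fin 1 → M | q (Sum.inr 0) < q (Sum.inl (Sum.inl 0)) } :=
    dlt hlt _ _
  have s4 := (dliftD' hD).compl.union sLT
  have s5 := definable_ALL (L := L) (M := M) s4
  have s6 := sΩ.inter s5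
  have s7 := definable_EX (L := L) (M := M) s6
  convert s7 using 1
  ext w
  simp only [mem_setOf_eq, mem_union, mem_inter_iff, mem_compl_iff]
  constructor
  · rintro ⟨u, hu, hsub⟩
    refine ⟨u, hu, fun v => ?_⟩
    simp only [mem_setOf_eq, Sum.elim_inl, Sum.elim_inr]
    by_cases hd : (Sum.elim (fun i => Sum.elim (Sum.elim w u) v (Sum.inl (Sum.inr i)))
        fun j => Sum.elim (Sum.elim w u) v (Sum.inr j)) ∈ D
    · right
      have : v 0 ∈ famFiber₁ D u := by
        rw [famFiber₁, mem_setOf_eq, elim_const u v]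
        exact hd
      exact hsub this
    · left; exact hd
  · rintro ⟨u, ⟨hu, hall⟩⟩
    refine ⟨u, hu, fun x hx => ?_⟩
    have h := hall (fun _ => x)
    simp only [mem_setOf_eq, Sum.elim_inl, Sum.elim_inr] at h
    rcases h with h | h
    · exact absurd hx h
    · exact h

end RSets
end St11
namespace St11
open FirstOrder FirstOrder.Language Set

variable {L : FirstOrder.Language} {M : Type*} [L.Structure M] [LinearOrder M]

/-- The realized type at `a`. -/
def pPtT (L : FirstOrder.Language) {M : Type*} [L.Structure M] [LinearOrder M] (a : M) :
    Set (Set M) := {X | Set.Definable₁ (Set.univ : Set M) L X ∧ a ∈ X}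

/-- The type `c⁻`. -/
def pLtT (L : FirstOrder.Language) {M : Type*} [L.Structure M] [LinearOrder M] (c : M) :
    Set (Set M) := {X | Set.Definable₁ (Set.univ : Set M) L X ∧ ∃ b, b < c ∧ Set.Ioo b c ⊆ X}

/-- The type `c⁺`. -/
def pGtT (L : FirstOrder.Language) {M : Type*} [L.Structure M] [LinearOrder M] (c : M) :
    Set (Set M) := {X | Set.Definable₁ (Set.univ : Set M) L X ∧ ∃ b, c < b ∧ Set.Ioo c b ⊆ X}

/-- The type `+∞`. -/
def pSupT (L : FirstOrder.Language) (M : Type*) [L.Structure M] [LinearOrder M] :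
    Set (Set M) := {X | Set.Definable₁ (Set.univ : Set M) L X ∧ ∃ b, Set.Ioi b ⊆ X}

/-- The type `-∞`. -/
def pInfT (L : FirstOrder.Language) (M : Type*) [L.Structure M] [LinearOrder M] :
    Set (Set M) := {X | Set.Definable₁ (Set.univ : Set M) L X ∧ ∃ b, Set.Iio b ⊆ X}

theorem d1inter {X Y : Set M} (hX : Set.Definable₁ (Set.univ : Set M) L X)
    (hY : Set.Definable₁ (Set.univ : Set M) L Y) :
    Set.Definable₁ (Set.univ : Set M) L (X ∩ Y) :=
  Set.Definable.inter hX hY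

theorem d1compl {X : Set M} (hX : Set.Definable₁ (Set.univ : Set M) L X) :
    Set.Definable₁ (Set.univ : Set M) L Xᶜ :=
  Set.Definable.compl hX

section Decide

variable (hM : IsOMinimal L M)
include hM

/-- Abstract germ decision lemma. -/
theorem decide_base {B : Set (Set M)} (hne : B.Nonempty)
    (hdir : ∀ b₁ ∈ B, ∀ b₂ ∈ B, ∃ b₃ ∈ B, b₃ ⊆ b₁ ∩ b₂)
    (hshape : ∀ t : Set M, ((∃ a : M, t = {a}) ∨ (∃ a b : M, t = Set.Ioo a b) ∨
        (∃ a : M, t = Set.Ioi a) ∨ (∃ a : M, t = Set.Iio a) ∨ t = Set.univ) →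
      ∃ b ∈ B, b ⊆ t ∨ b ⊆ tᶜ)
    {X : Set M} (hX : Set.Definable₁ (Set.univ : Set M) L X) :
    ∃ b ∈ B, b ⊆ X ∨ b ⊆ Xᶜ := by
  classical
  obtain ⟨F, hFX, hsh⟩ := hM.2.2.2.2.2 X hX
  subst hFX
  clear hX
  induction F using Finset.induction_on with
  | empty =>
    obtain ⟨b, hb⟩ := hne
    exact ⟨b, hb, Or.inr (by simp)⟩
  | @insert t F htF ih =>
    obtain ⟨b₁, hb₁, hb₁'⟩ := hshape t (hsh t (Finset.mem_insert_self t F))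
    obtain ⟨b₂, hb₂, hb₂'⟩ := ih (fun s hs => hsh s (Finset.mem_insert_of_mem hs))
    rw [Finset.coe_insert, sUnion_insert]
    rcases hb₁' with h1 | h1
    · exact ⟨b₁, hb₁, Or.inl (h1.trans subset_union_left)⟩
    rcases hb₂' with h2 | h2
    · exact ⟨b₂, hb₂, Or.inl (h2.trans subset_union_right)⟩
    obtain ⟨b₃, hb₃, hsub⟩ := hdir b₁ hb₁ b₂ hb₂
    refine ⟨b₃, hb₃, Or.inr fun x hx => ?_⟩
    have hx' := hsub hx
    intro hmem
    rcases hmem with hmem | hmem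
    · exact h1 hx'.1 hmem
    · exact h2 hx'.2 hmem

theorem decideLt (c : M) {X : Set M} (hX : Set.Definable₁ (Set.univ : Set M) L X) :
    (∃ b, b < c ∧ Set.Ioo b c ⊆ X) ∨ (∃ b, b < c ∧ Set.Ioo b c ⊆ Xᶜ) := by
  haveI : NoMinOrder M := hM.2.2.1
  have h := decide_base hM (B := {s : Set M | ∃ b, b < c ∧ s = Set.Ioo b c}) ?_ ?_ ?_ hX
  · obtain ⟨b, ⟨b', hb', rfl⟩, hor⟩ := h
    rcases hor with h' | h'
    · exact Or.inl ⟨b', hb', h'⟩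
    · exact Or.inr ⟨b', hb', h'⟩
  · obtain ⟨b, hb⟩ := exists_lt c
    exact ⟨Set.Ioo b c, b, hb, rfl⟩
  · rintro _ ⟨b₁, hb₁, rfl⟩ _ ⟨b₂, hb₂, rfl⟩
    exact ⟨Set.Ioo (max b₁ b₂) c, ⟨max b₁ b₂, max_lt hb₁ hb₂, rfl⟩,
      fun x hx => ⟨⟨lt_of_le_of_lt (le_max_left _ _) hx.1, hx.2⟩,
        ⟨lt_of_le_of_lt (le_max_right _ _) hx.1, hx.2⟩⟩⟩
  · rintro t (⟨a, rfl⟩ | ⟨a, b, rfl⟩ | ⟨a, rfl⟩ | ⟨a, rfl⟩ | rfl)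
    · by_cases h : a < c
      · exact ⟨Set.Ioo a c, ⟨a, h, rfl⟩, Or.inr fun x hx => by
          simp only [mem_compl_iff, mem_singleton_iff]; exact fun he => absurd hx.1 (by rw [he]; exact lt_irrefl a)⟩
      · obtain ⟨b, hb⟩ := exists_lt c
        exact ⟨Set.Ioo b c, ⟨b, hb, rfl⟩, Or.inr fun x hx => by
          simp only [mem_compl_iff, mem_singleton_iff]
          exact fun he => h (he ▸ hx.2)⟩
    · by_cases h1 : a < c
      · by_cases h2 : c ≤ b
        · exact ⟨Set.Ioo a c, ⟨a, h1, rfl⟩, Or.inl fun x hx => ⟨hx.1, lt_of_lt_of_le hx.2 h2⟩⟩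
        · push_neg at h2
          exact ⟨Set.Ioo (max a b) c, ⟨max a b, max_lt h1 h2, rfl⟩, Or.inr fun x hx hmem =>
            absurd (lt_of_le_of_lt (le_max_right a b) hx.1) (not_lt.2 (le_of_lt hmem.2))⟩
      · push_neg at h1
        obtain ⟨b₀, hb₀⟩ := exists_lt c
        exact ⟨Set.Ioo b₀ c, ⟨b₀, hb₀, rfl⟩, Or.inr fun x hx hmem =>
          absurd (lt_of_lt_of_le hx.2 h1) (not_lt.2 (le_of_lt hmem.1))⟩
    · by_cases h : a < c
      · exact ⟨Set.Ioo a c, ⟨a, h, rfl⟩, Or.inl fun x hx => hx.1⟩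
      · push_neg at h
        obtain ⟨b₀, hb₀⟩ := exists_lt c
        exact ⟨Set.Ioo b₀ c, ⟨b₀, hb₀, rfl⟩, Or.inr fun x hx hmem =>
          absurd (lt_of_lt_of_le hx.2 h) (not_lt.2 (le_of_lt hmem))⟩
    · by_cases h : c ≤ a
      · obtain ⟨b₀, hb₀⟩ := exists_lt c
        exact ⟨Set.Ioo b₀ c, ⟨b₀, hb₀, rfl⟩, Or.inl fun x hx => lt_of_lt_of_le hx.2 h⟩
      · push_neg at h
        exact ⟨Set.Ioo a c, ⟨a, h, rfl⟩, Or.inr fun x hx hmem => absurd hmem (not_lt.2 (le_of_lt hx.1))⟩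
    · obtain ⟨b₀, hb₀⟩ := exists_lt c
      exact ⟨Set.Ioo b₀ c, ⟨b₀, hb₀, rfl⟩, Or.inl (subset_univ _)⟩

theorem decideGt (c : M) {X : Set M} (hX : Set.Definable₁ (Set.univ : Set M) L X) :
    (∃ b, c < b ∧ Set.Ioo c b ⊆ X) ∨ (∃ b, c < b ∧ Set.Ioo c b ⊆ Xᶜ) := by
  haveI : NoMaxOrder M := hM.2.2.2.1
  have h := decide_base hM (B := {s : Set M | ∃ b, c < b ∧ s = Set.Ioo c b}) ?_ ?_ ?_ hX
  · obtain ⟨b, ⟨b', hb', rfl⟩, hor⟩ := h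
    rcases hor with h' | h'
    · exact Or.inl ⟨b', hb', h'⟩
    · exact Or.inr ⟨b', hb', h'⟩
  · obtain ⟨b, hb⟩ := exists_gt c
    exact ⟨Set.Ioo c b, b, hb, rfl⟩
  · rintro _ ⟨b₁, hb₁, rfl⟩ _ ⟨b₂, hb₂, rfl⟩
    exact ⟨Set.Ioo c (min b₁ b₂), ⟨min b₁ b₂, lt_min hb₁ hb₂, rfl⟩,
      fun x hx => ⟨⟨hx.1, lt_of_lt_of_le hx.2 (min_le_left _ _)⟩,
        ⟨hx.1, lt_of_lt_of_le hx.2 (min_le_right _ _)⟩⟩⟩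
  · rintro t (⟨a, rfl⟩ | ⟨a, b, rfl⟩ | ⟨a, rfl⟩ | ⟨a, rfl⟩ | rfl)
    · by_cases h : c < a
      · exact ⟨Set.Ioo c a, ⟨a, h, rfl⟩, Or.inr fun x hx => by
          simp only [mem_compl_iff, mem_singleton_iff]
          exact fun he => absurd hx.2 (by rw [he]; exact lt_irrefl a)⟩
      · obtain ⟨b, hb⟩ := exists_gt c
        exact ⟨Set.Ioo c b, ⟨b, hb, rfl⟩, Or.inr fun x hx => by
          simp only [mem_compl_iff, mem_singleton_iff]
          exact fun he => h (he ▸ hx.1)⟩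
    · by_cases h1 : c < b
      · by_cases h2 : a ≤ c
        · exact ⟨Set.Ioo c b, ⟨b, h1, rfl⟩, Or.inl fun x hx => ⟨lt_of_le_of_lt h2 hx.1, hx.2⟩⟩
        · push_neg at h2
          exact ⟨Set.Ioo c (min a b), ⟨min a b, lt_min h2 h1, rfl⟩, Or.inr fun x hx hmem =>
            absurd (lt_of_lt_of_le hx.2 (min_le_left a b)) (not_lt.2 (le_of_lt hmem.1))⟩
      · push_neg at h1
        obtain ⟨b₀, hb₀⟩ := exists_gt c
        exact ⟨Set.Ioo c b₀, ⟨b₀, hb₀, rfl⟩, Or.inr fun x hx hmem =>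
          absurd (lt_of_le_of_lt h1 hx.1) (not_lt.2 (le_of_lt hmem.2))⟩
    · by_cases h : a ≤ c
      · obtain ⟨b₀, hb₀⟩ := exists_gt c
        exact ⟨Set.Ioo c b₀, ⟨b₀, hb₀, rfl⟩, Or.inl fun x hx => lt_of_le_of_lt h hx.1⟩
      · push_neg at h
        exact ⟨Set.Ioo c a, ⟨a, h, rfl⟩, Or.inr fun x hx hmem =>
          absurd hmem (not_lt.2 (le_of_lt hx.2))⟩
    · by_cases h : c < a
      · exact ⟨Set.Ioo c a, ⟨a, h, rfl⟩, Or.inl fun x hx => hx.2⟩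
      · push_neg at h
        obtain ⟨b₀, hb₀⟩ := exists_gt c
        exact ⟨Set.Ioo c b₀, ⟨b₀, hb₀, rfl⟩, Or.inr fun x hx hmem =>
          absurd (lt_of_le_of_lt h hx.1) (not_lt.2 (le_of_lt hmem))⟩
    · obtain ⟨b₀, hb₀⟩ := exists_gt c
      exact ⟨Set.Ioo c b₀, ⟨b₀, hb₀, rfl⟩, Or.inl (subset_univ _)⟩

theorem decideSup {X : Set M} (hX : Set.Definable₁ (Set.univ : Set M) L X) :
    (∃ b, Set.Ioi b ⊆ X) ∨ (∃ b, Set.Ioi b ⊆ Xᶜ) := by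
  have hMne : Nonempty M := hM.1
  obtain ⟨x₀⟩ := hMne
  have h := decide_base hM (B := {s : Set M | ∃ b, s = Set.Ioi b}) ⟨Set.Ioi x₀, x₀, rfl⟩ ?_ ?_ hX
  · obtain ⟨b, ⟨b', rfl⟩, hor⟩ := h
    rcases hor with h' | h'
    · exact Or.inl ⟨b', h'⟩
    · exact Or.inr ⟨b', h'⟩
  · rintro _ ⟨b₁, rfl⟩ _ ⟨b₂, rfl⟩
    exact ⟨Set.Ioi (max b₁ b₂), ⟨max b₁ b₂, rfl⟩, fun x hx =>
      ⟨lt_of_le_of_lt (le_max_left _ _) hx, lt_of_le_of_lt (le_max_right _ _) hx⟩⟩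
  · rintro t (⟨a, rfl⟩ | ⟨a, b, rfl⟩ | ⟨a, rfl⟩ | ⟨a, rfl⟩ | rfl)
    · exact ⟨Set.Ioi a, ⟨a, rfl⟩, Or.inr fun x hx => by
        simp only [mem_compl_iff, mem_singleton_iff]
        exact fun he => absurd hx (by rw [he]; exact lt_irrefl a)⟩
    · exact ⟨Set.Ioi b, ⟨b, rfl⟩, Or.inr fun x hx hmem => absurd hmem.2 (not_lt.2 (le_of_lt hx))⟩
    · exact ⟨Set.Ioi a, ⟨a, rfl⟩, Or.inl fun x hx => hx⟩
    · exact ⟨Set.Ioi a, ⟨a, rfl⟩, Or.inr fun x hx hmem => absurd hmem (not_lt.2 (le_of_lt hx))⟩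
    · exact ⟨Set.Ioi x₀, ⟨x₀, rfl⟩, Or.inl (subset_univ _)⟩

theorem decideInf {X : Set M} (hX : Set.Definable₁ (Set.univ : Set M) L X) :
    (∃ b, Set.Iio b ⊆ X) ∨ (∃ b, Set.Iio b ⊆ Xᶜ) := by
  have hMne : Nonempty M := hM.1
  obtain ⟨x₀⟩ := hMne
  have h := decide_base hM (B := {s : Set M | ∃ b, s = Set.Iio b}) ⟨Set.Iio x₀, x₀, rfl⟩ ?_ ?_ hX
  · obtain ⟨b, ⟨b', rfl⟩, hor⟩ := h
    rcases hor with h' | h'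
    · exact Or.inl ⟨b', h'⟩
    · exact Or.inr ⟨b', h'⟩
  · rintro _ ⟨b₁, rfl⟩ _ ⟨b₂, rfl⟩
    exact ⟨Set.Iio (min b₁ b₂), ⟨min b₁ b₂, rfl⟩, fun x hx =>
      ⟨lt_of_lt_of_le hx (min_le_left _ _), lt_of_lt_of_le hx (min_le_right _ _)⟩⟩
  · rintro t (⟨a, rfl⟩ | ⟨a, b, rfl⟩ | ⟨a, rfl⟩ | ⟨a, rfl⟩ | rfl)
    · exact ⟨Set.Iio a, ⟨a, rfl⟩, Or.inr fun x hx => by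
        simp only [mem_compl_iff, mem_singleton_iff]
        exact fun he => absurd hx (by rw [he]; exact lt_irrefl a)⟩
    · exact ⟨Set.Iio a, ⟨a, rfl⟩, Or.inr fun x hx hmem => absurd hmem.1 (not_lt.2 (le_of_lt hx))⟩
    · exact ⟨Set.Iio a, ⟨a, rfl⟩, Or.inr fun x hx hmem => absurd hmem (not_lt.2 (le_of_lt hx))⟩
    · exact ⟨Set.Iio a, ⟨a, rfl⟩, Or.inl fun x hx => hx⟩
    · exact ⟨Set.Iio x₀, ⟨x₀, rfl⟩, Or.inl (subset_univ _)⟩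

/-- Structure of a nonempty, proper, upward-closed definable set. -/
theorem upward_struct {R : Set M} (hR : Set.Definable₁ (Set.univ : Set M) L R)
    (hup : ∀ x ∈ R, ∀ y, x ≤ y → y ∈ R) (hne : R.Nonempty) (hproper : R ≠ Set.univ) :
    ∃ c, Set.Ioi c ⊆ R ∧ R ⊆ Set.Ici c := by
  classical
  haveI : NoMinOrder M := hM.2.2.1
  haveI : DenselyOrdered M := hM.2.1
  obtain ⟨z, hz⟩ : ∃ z, z ∉ R := by
    by_contra h
    push_neg at h
    exact hproper (eq_univ_iff_forall.2 h)
  obtain ⟨F, hFR, hsh⟩ := hM.2.2.2.2.2 R hR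
  -- every element of F is a subset of R
  have hsub : ∀ t ∈ F, t ⊆ R := by
    intro t ht
    rw [hFR]
    exact fun x hx => ⟨t, ht, hx⟩
  -- Good t: has a lower bound which is "reached from above"
  set Good : Set M → Prop := fun t => ∃ l, t ⊆ Set.Ici l ∧ ∀ x, l < x → ∃ y ∈ t, y ≤ x with hGood
  have hpiece : ∀ t ∈ F, t = ∅ ∨ Good t := by
    intro t ht
    rcases hsh t ht with ⟨a, rfl⟩ | ⟨a, b, rfl⟩ | ⟨a, rfl⟩ | ⟨a, rfl⟩ | rfl
    · exact Or.inr ⟨a, by simp, fun x hx => ⟨a, rfl, le_of_lt hx⟩⟩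
    · by_cases hab : a < b
      · refine Or.inr ⟨a, fun y hy => le_of_lt hy.1, fun x hx => ?_⟩
        obtain ⟨y, hy1, hy2⟩ := exists_between (lt_min hab hx)
        exact ⟨y, ⟨hy1, lt_of_lt_of_le hy2 (min_le_left _ _)⟩,
          le_of_lt (lt_of_lt_of_le hy2 (min_le_right _ _))⟩
      · exact Or.inl (Set.Ioo_eq_empty hab)
    · refine Or.inr ⟨a, fun y hy => le_of_lt hy, fun x hx => ?_⟩
      obtain ⟨y, hy1, hy2⟩ := exists_between hx
      exact ⟨y, hy1, le_of_lt hy2⟩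
    · exfalso
      obtain ⟨w, hw⟩ := exists_lt (min a z)
      have hwR : w ∈ R := hsub _ ht (lt_of_lt_of_le hw (min_le_left _ _))
      exact hz (hup w hwR z (le_of_lt (lt_of_lt_of_le hw (min_le_right _ _))))
    · exact absurd (hsub _ ht (mem_univ z)) hz
  -- Good is closed under finite unions, by induction
  have hind : ∀ G : Finset (Set M), (∀ t ∈ G, t = ∅ ∨ Good t) →
      (⋃₀ (G : Set (Set M))) = ∅ ∨ Good (⋃₀ (G : Set (Set M))) := by
    intro G
    induction G using Finset.induction_on with
    | empty => intro _; left; simp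
    | @insert t G htG ih =>
      intro hG
      rw [Finset.coe_insert, sUnion_insert]
      rcases hG t (Finset.mem_insert_self t G) with ht | ⟨l₁, hl₁, hl₁'⟩
      · rcases ih (fun s hs => hG s (Finset.mem_insert_of_mem hs)) with hG' | ⟨l₂, hl₂, hl₂'⟩
        · rw [ht, hG']; left; simp
        · rw [ht, empty_union]; exact Or.inr ⟨l₂, hl₂, hl₂'⟩
      · rcases ih (fun s hs => hG s (Finset.mem_insert_of_mem hs)) with hG' | ⟨l₂, hl₂, hl₂'⟩
        · rw [hG', union_empty]; exact Or.inr ⟨l₁, hl₁, hl₁'⟩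
        · refine Or.inr ⟨min l₁ l₂, ?_, ?_⟩
          · rintro y (hy | hy)
            · exact le_trans (min_le_left _ _) (hl₁ hy)
            · exact le_trans (min_le_right _ _) (hl₂ hy)
          · intro x hx
            rcases lt_or_ge l₁ x with h | h
            · obtain ⟨y, hy, hyx⟩ := hl₁' x h
              exact ⟨y, Or.inl hy, hyx⟩
            · have hx2 : l₂ < x := by
                rcases min_lt_iff.1 hx with h' | h'
                · exact absurd h' (not_lt.2 h)
                · exact h'
              obtain ⟨y, hy, hyx⟩ := hl₂' x hx2
              exact ⟨y, Or.inr hy, hyx⟩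
    
  rcases hind F hpiece with h | ⟨l, hl, hl'⟩
  · rw [hFR] at hne; rw [h] at hne; exact absurd hne (by simp)
  · rw [← hFR] at hl hl'
    refine ⟨l, fun x hx => ?_, hl⟩
    obtain ⟨y, hy, hyx⟩ := hl' x hx
    exact hup y hy x hyx

end Decide
end St11
namespace St11
open FirstOrder FirstOrder.Language Set

variable {L : FirstOrder.Language} {M : Type*} [L.Structure M] [LinearOrder M]

theorem poi_ordConnected {X : Set M} (h : IsPointOrInterval X) : X.OrdConnected := by
  rcases h with ⟨a, rfl⟩ | ⟨a, b, rfl⟩ | ⟨a, b, rfl⟩ | ⟨a, b, rfl⟩ | ⟨a, b, rfl⟩ |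
    ⟨a, rfl⟩ | ⟨a, rfl⟩ | ⟨a, rfl⟩ | ⟨a, rfl⟩ | rfl
  · exact (Set.Icc_self a) ▸ Set.ordConnected_Icc
  · exact Set.ordConnected_Icc
  · exact Set.ordConnected_Ico
  · exact Set.ordConnected_Ioc
  · exact Set.ordConnected_Ioo
  · exact Set.ordConnected_Ici
  · exact Set.ordConnected_Iic
  · exact Set.ordConnected_Ioi
  · exact Set.ordConnected_Iio
  · exact Set.ordConnected_univ

section TypeLemmas

variable (hM : IsOMinimal L M)
include hM

theorem isTypeOn_pPt (a : M) : IsTypeOn₁ L (pPtT L a) := by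
  refine ⟨fun X hX => hX.1, ?_, ?_, ?_, ?_⟩
  · rintro ⟨_, h⟩; exact h
  · rintro X ⟨hX, haX⟩ Y ⟨hY, haY⟩; exact ⟨d1inter hX hY, haX, haY⟩
  · rintro X ⟨hX, haX⟩ Y hY hXY; exact ⟨hY, hXY haX⟩
  · intro X hX
    by_cases h : a ∈ X
    · exact Or.inl ⟨hX, h⟩
    · exact Or.inr ⟨d1compl hX, h⟩

theorem isTypeOn_pLt (c : M) : IsTypeOn₁ L (pLtT L c) := by
  haveI : DenselyOrdered M := hM.2.1
  refine ⟨fun X hX => hX.1, ?_, ?_, ?_, ?_⟩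
  · rintro ⟨_, b, hb, hsub⟩
    obtain ⟨x, hx1, hx2⟩ := exists_between hb
    exact hsub ⟨hx1, hx2⟩
  · rintro X ⟨hX, b₁, hb₁, h₁⟩ Y ⟨hY, b₂, hb₂, h₂⟩
    exact ⟨d1inter hX hY, max b₁ b₂, max_lt hb₁ hb₂, fun x hx =>
      ⟨h₁ ⟨lt_of_le_of_lt (le_max_left _ _) hx.1, hx.2⟩,
       h₂ ⟨lt_of_le_of_lt (le_max_right _ _) hx.1, hx.2⟩⟩⟩
  · rintro X ⟨hX, b, hb, hsub⟩ Y hY hXY; exact ⟨hY, b, hb, hsub.trans hXY⟩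
  · intro X hX
    rcases decideLt hM c hX with ⟨b, hb, h⟩ | ⟨b, hb, h⟩
    · exact Or.inl ⟨hX, b, hb, h⟩
    · exact Or.inr ⟨d1compl hX, b, hb, h⟩

theorem isTypeOn_pGt (c : M) : IsTypeOn₁ L (pGtT L c) := by
  haveI : DenselyOrdered M := hM.2.1
  refine ⟨fun X hX => hX.1, ?_, ?_, ?_, ?_⟩
  · rintro ⟨_, b, hb, hsub⟩
    obtain ⟨x, hx1, hx2⟩ := exists_between hb
    exact hsub ⟨hx1, hx2⟩
  · rintro X ⟨hX, b₁, hb₁, h₁⟩ Y ⟨hY, b₂, hb₂, h₂⟩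
    exact ⟨d1inter hX hY, min b₁ b₂, lt_min hb₁ hb₂, fun x hx =>
      ⟨h₁ ⟨hx.1, lt_of_lt_of_le hx.2 (min_le_left _ _)⟩,
       h₂ ⟨hx.1, lt_of_lt_of_le hx.2 (min_le_right _ _)⟩⟩⟩
  · rintro X ⟨hX, b, hb, hsub⟩ Y hY hXY; exact ⟨hY, b, hb, hsub.trans hXY⟩
  · intro X hX
    rcases decideGt hM c hX with ⟨b, hb, h⟩ | ⟨b, hb, h⟩
    · exact Or.inl ⟨hX, b, hb, h⟩
    · exact Or.inr ⟨d1compl hX, b, hb, h⟩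

theorem isTypeOn_pSup : IsTypeOn₁ L (pSupT L M) := by
  haveI : NoMaxOrder M := hM.2.2.2.1
  refine ⟨fun X hX => hX.1, ?_, ?_, ?_, ?_⟩
  · rintro ⟨_, b, hsub⟩
    obtain ⟨x, hx⟩ := exists_gt b
    exact hsub hx
  · rintro X ⟨hX, b₁, h₁⟩ Y ⟨hY, b₂, h₂⟩
    exact ⟨d1inter hX hY, max b₁ b₂, fun x hx =>
      ⟨h₁ (lt_of_le_of_lt (le_max_left _ _) hx), h₂ (lt_of_le_of_lt (le_max_right _ _) hx)⟩⟩
  · rintro X ⟨hX, b, hsub⟩ Y hY hXY; exact ⟨hY, b, hsub.trans hXY⟩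
  · intro X hX
    rcases decideSup hM hX with ⟨b, h⟩ | ⟨b, h⟩
    · exact Or.inl ⟨hX, b, h⟩
    · exact Or.inr ⟨d1compl hX, b, h⟩

theorem isTypeOn_pInf : IsTypeOn₁ L (pInfT L M) := by
  haveI : NoMinOrder M := hM.2.2.1
  refine ⟨fun X hX => hX.1, ?_, ?_, ?_, ?_⟩
  · rintro ⟨_, b, hsub⟩
    obtain ⟨x, hx⟩ := exists_lt b
    exact hsub hx
  · rintro X ⟨hX, b₁, h₁⟩ Y ⟨hY, b₂, h₂⟩
    exact ⟨d1inter hX hY, min b₁ b₂, fun x hx =>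
      ⟨h₁ (lt_of_lt_of_le hx (min_le_left _ _)), h₂ (lt_of_lt_of_le hx (min_le_right _ _))⟩⟩
  · rintro X ⟨hX, b, hsub⟩ Y hY hXY; exact ⟨hY, b, hsub.trans hXY⟩
  · intro X hX
    rcases decideInf hM hX with ⟨b, h⟩ | ⟨b, h⟩
    · exact Or.inl ⟨hX, b, h⟩
    · exact Or.inr ⟨d1compl hX, b, h⟩

omit hM

variable (hlt : Set.Definable (Set.univ : Set M) L {v : Fin 2 → M | v 0 < v 1})
include hlt

omit hlt in
theorem pick_pPt {m : ℕ} {D : Set (Fin m ⊕ Fin 1 → M)}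
    (hD : Set.Definable (Set.univ : Set M) L D) (a : M) :
    Set.Definable (Set.univ : Set M) L {u : Fin m → M | famFiber₁ D u ∈ pPtT L a} := by
  convert pickPt hD a using 1
  ext u
  simp only [mem_setOf_eq, pPtT]
  exact and_iff_right (fiber_definable hD u)

theorem pick_pLt {m : ℕ} {D : Set (Fin m ⊕ Fin 1 → M)}
    (hD : Set.Definable (Set.univ : Set M) L D) (c : M) :
    Set.Definable (Set.univ : Set M) L {u : Fin m → M | famFiber₁ D u ∈ pLtT L c} := by
  convert pickLt hlt hD c using 1
  ext u
  simp only [mem_setOf_eq, pLtT]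
  exact and_iff_right (fiber_definable hD u)

theorem pick_pGt {m : ℕ} {D : Set (Fin m ⊕ Fin 1 → M)}
    (hD : Set.Definable (Set.univ : Set M) L D) (c : M) :
    Set.Definable (Set.univ : Set M) L {u : Fin m → M | famFiber₁ D u ∈ pGtT L c} := by
  convert pickGt hlt hD c using 1
  ext u
  simp only [mem_setOf_eq, pGtT]
  exact and_iff_right (fiber_definable hD u)

theorem pick_pSup {m : ℕ} {D : Set (Fin m ⊕ Fin 1 → M)}
    (hD : Set.Definable (Set.univ : Set M) L D) :
    Set.Definable (Set.univ : Set M) L {u : Fin m → M | famFiber₁ D u ∈ pSupT L M} := by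
  convert pickSup hlt hD using 1
  ext u
  simp only [mem_setOf_eq, pSupT]
  exact and_iff_right (fiber_definable hD u)

theorem pick_pInf {m : ℕ} {D : Set (Fin m ⊕ Fin 1 → M)}
    (hD : Set.Definable (Set.univ : Set M) L D) :
    Set.Definable (Set.univ : Set M) L {u : Fin m → M | famFiber₁ D u ∈ pInfT L M} := by
  convert pickInf hlt hD using 1
  ext u
  simp only [mem_setOf_eq, pInfT]
  exact and_iff_right (fiber_definable hD u)

omit hlt in
theorem isDefTypeOver_pPt (a : M) : IsDefTypeOver₁ L (Set.univ : Set M) (pPtT L a) := by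
  intro m D hD0
  exact pick_pPt (hD0.mono (empty_subset _)) a

theorem isDefTypeOver_pLt (c : M) : IsDefTypeOver₁ L (Set.univ : Set M) (pLtT L c) := by
  intro m D hD0
  exact pick_pLt hlt (hD0.mono (empty_subset _)) c

theorem isDefTypeOver_pGt (c : M) : IsDefTypeOver₁ L (Set.univ : Set M) (pGtT L c) := by
  intro m D hD0
  exact pick_pGt hlt (hD0.mono (empty_subset _)) c

theorem isDefTypeOver_pSup : IsDefTypeOver₁ L (Set.univ : Set M) (pSupT L M) := by
  intro m D hD0
  exact pick_pSup hlt (hD0.mono (empty_subset _))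

theorem isDefTypeOver_pInf : IsDefTypeOver₁ L (Set.univ : Set M) (pInfT L M) := by
  intro m D hD0
  exact pick_pInf hlt (hD0.mono (empty_subset _))

end TypeLemmas
end St11
namespace St11
open FirstOrder FirstOrder.Language Set

variable {L : FirstOrder.Language} {M : Type*} [L.Structure M] [LinearOrder M]

theorem insert_bound {S : Set (Set M)} {k : ℕ}
    (hbound : ∀ F : Finset (Set M), ↑F ⊆ S →
      ((↑F : Set (Set M)).Pairwise fun X Y => X ∩ Y = ∅) → F.card ≤ k + 1)
    {q : Set (Set M)}
    (hw : ∀ F : Finset (Set M), ↑F ⊆ S \ q → F.Nonempty →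
      ((↑F : Set (Set M)).Pairwise fun X Y => X ∩ Y = ∅) →
      ∃ X₀ ∈ S, X₀.Nonempty ∧ ∀ Y ∈ F, X₀ ∩ Y = ∅) :
    ∀ F : Finset (Set M), ↑F ⊆ S \ q →
      ((↑F : Set (Set M)).Pairwise fun X Y => X ∩ Y = ∅) → F.card ≤ k := by
  classical
  intro F hF hFp
  rcases F.eq_empty_or_nonempty with rfl | hFne
  · simp
  obtain ⟨X₀, hX₀S, hX₀ne, hdisj⟩ := hw F hF hFne hFp
  have hX₀F : X₀ ∉ F := fun hmem =>
    hX₀ne.ne_empty (by rw [← Set.inter_self X₀]; exact hdisj X₀ hmem)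
  have h := hbound (insert X₀ F) ?_ ?_
  · rw [Finset.card_insert_of_notMem hX₀F] at h
    omega
  · rw [Finset.coe_insert]
    refine Set.insert_subset hX₀S (fun Y hY => (hF hY).1)
  · rw [Finset.coe_insert]
    have hsymm : Std.Symm (fun X Y : Set M => X ∩ Y = ∅) := by
      refine ⟨?_⟩
      intro X Y h
      rwa [Set.inter_comm]
    exact Set.pairwise_insert_of_symm.2 ⟨hFp, fun b hb _ => hdisj b hb⟩

theorem main_ind (hM : IsOMinimal L M) :
    ∀ (k : ℕ) (S : Set (Set M)), IsDefFamily₁ L (Set.univ : Set M) S →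
    (∀ X ∈ S, X.Nonempty ∧ IsPointOrInterval X) →
    (∀ F : Finset (Set M), ↑F ⊆ S →
      ((↑F : Set (Set M)).Pairwise fun X Y => X ∩ Y = ∅) → F.card ≤ k) →
    ∃ p : Fin k → Set (Set M),
      (∀ i, IsTypeOn₁ L (p i) ∧ IsDefTypeOver₁ L (Set.univ : Set M) (p i)) ∧
      ∀ X ∈ S, ∃ i, X ∈ p i := by
  classical
  intro k
  induction k with
  | zero =>
    intro S hS hint hbound
    refine ⟨Fin.elim0, fun i => i.elim0, fun X hX => ?_⟩
    exfalso
    have h1 := hbound {X} (by simpa using hX) (by simp)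
    simp at h1
  | succ k ih =>
    intro S hS hint hbound
    obtain ⟨m, Ω, D, hΩ, hD, rfl⟩ := hS
    have hlt : Set.Definable (Set.univ : Set M) L {v : Fin 2 → M | v 0 < v 1} :=
      hM.2.2.2.2.1.mono (empty_subset _)
    haveI : Nonempty M := hM.1
    haveI : DenselyOrdered M := hM.2.1
    haveI : NoMinOrder M := hM.2.2.1
    haveI : NoMaxOrder M := hM.2.2.2.1
    have hfne : ∀ u ∈ Ω, (famFiber₁ D u).Nonempty :=
      fun u hu => (hint _ ⟨u, hu, rfl⟩).1
    have hXne : ∀ X ∈ famFiber₁ D '' Ω, X.Nonempty := fun X hX => (hint X hX).1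
    have hconv : ∀ X ∈ famFiber₁ D '' Ω, X.OrdConnected :=
      fun X hX => poi_ordConnected (hint X hX).2
    suffices h : ∃ q : Set (Set M),
        (IsTypeOn₁ L q ∧ IsDefTypeOver₁ L (Set.univ : Set M) q) ∧
        Set.Definable (Set.univ : Set M) L {u : Fin m → M | famFiber₁ D u ∈ q} ∧
        (∀ F : Finset (Set M), ↑F ⊆ famFiber₁ D '' Ω \ q →
          ((↑F : Set (Set M)).Pairwise fun X Y => X ∩ Y = ∅) → F.card ≤ k) by
      obtain ⟨q, hq, hdefq, hbd⟩ := h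
      have hS' : famFiber₁ D '' (Ω ∩ {u | famFiber₁ D u ∈ q}ᶜ) = (famFiber₁ D '' Ω) \ q := by
        ext X
        constructor
        · rintro ⟨u, ⟨hu, hq'⟩, rfl⟩; exact ⟨⟨u, hu, rfl⟩, hq'⟩
        · rintro ⟨⟨u, hu, rfl⟩, hq'⟩; exact ⟨u, ⟨hu, hq'⟩, rfl⟩
      obtain ⟨p', hp', hcov'⟩ := ih (famFiber₁ D '' (Ω ∩ {u | famFiber₁ D u ∈ q}ᶜ))
        ⟨m, Ω ∩ {u | famFiber₁ D u ∈ q}ᶜ, D, hΩ.inter hdefq.compl, hD, rfl⟩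
        (fun X hX => hint X (by rw [hS'] at hX; exact hX.1))
        (by
          intro F hF hFp
          apply hbd F _ hFp
          rwa [← hS'])
      refine ⟨Fin.cons q p', ?_, ?_⟩
      · intro i
        refine Fin.cases ?_ ?_ i
        · rw [Fin.cons_zero]; exact hq
        · intro j; rw [Fin.cons_succ]; exact hp' j
      · intro X hX
        by_cases hXq : X ∈ q
        · exact ⟨0, by rw [Fin.cons_zero]; exact hXq⟩
        · obtain ⟨i, hi⟩ := hcov' X (by rw [hS']; exact ⟨hX, hXq⟩)
          exact ⟨i.succ, by rw [Fin.cons_succ]; exact hi⟩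
    -- produce the good type q
    set R1 : Set M := {c | ∃ u ∈ Ω, famFiber₁ D u ⊆ Set.Iic c} with hR1def
    have hR1d : Set.Definable₁ (Set.univ : Set M) L R1 := defR1 hlt hΩ hD
    have hR1up : ∀ x ∈ R1, ∀ y, x ≤ y → y ∈ R1 := by
      rintro x ⟨u, hu, hx⟩ y hxy
      exact ⟨u, hu, hx.trans (Set.Iic_subset_Iic.2 hxy)⟩
    by_cases hR1e : R1 = ∅
    · -- every member is cofinal: use the type at +∞
      refine ⟨pSupT L M, ⟨isTypeOn_pSup hM, isDefTypeOver_pSup hlt⟩, pick_pSup hlt hD, ?_⟩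
      refine insert_bound hbound ?_
      rintro F hF ⟨X, hXF⟩ _
      exfalso
      have hX' := hF hXF
      obtain ⟨u, hu, hXeq⟩ := hX'.1
      obtain ⟨p₀, hp₀⟩ := hXne X hX'.1
      apply hX'.2
      refine ⟨hXeq ▸ fiber_definable hD u, p₀, fun w hw => ?_⟩
      have hns : ¬ X ⊆ Set.Iic w := by
        intro hsub
        exact (Set.eq_empty_iff_forall_notMem.1 hR1e w) ⟨u, hu, hXeq ▸ hsub⟩
      obtain ⟨y, hyX, hyw⟩ := Set.not_subset.1 hns
      exact (hconv X hX'.1).out hp₀ hyX ⟨le_of_lt hw, le_of_lt (not_le.1 hyw)⟩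
    · by_cases hR1u : R1 = Set.univ
      · -- type at -∞
        refine ⟨pInfT L M, ⟨isTypeOn_pInf hM, isDefTypeOver_pInf hlt⟩, pick_pInf hlt hD, ?_⟩
        refine insert_bound hbound ?_
        intro F hF hFne _
        have hz : ∀ Y ∈ F, ∃ z, Y ∩ Set.Iio z = ∅ := by
          intro Y hY
          have hY' := hF hY
          obtain ⟨y₀, hy₀⟩ := hXne Y hY'.1
          have hnot : ¬ Set.Iio y₀ ⊆ Y := by
            intro hsub
            obtain ⟨u, hu, hYeq⟩ := hY'.1
            exact hY'.2 ⟨hYeq ▸ fiber_definable hD u, y₀, hsub⟩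
          obtain ⟨z, hz1, hz2⟩ := Set.not_subset.1 hnot
          refine ⟨z, Set.eq_empty_iff_forall_notMem.2 ?_⟩
          rintro w ⟨hwY, hwz⟩
          exact hz2 ((hconv Y hY'.1).out hwY hy₀ ⟨le_of_lt hwz, le_of_lt hz1⟩)
        choose! z hzspec using hz
        obtain ⟨Ym, hYm, hmin⟩ := Finset.exists_min_image F z hFne
        obtain ⟨x, hx⟩ := exists_lt (z Ym)
        have hxR : x ∈ R1 := by rw [hR1u]; trivial
        obtain ⟨u₀, hu₀, hsub⟩ := hxR
        refine ⟨famFiber₁ D u₀, ⟨u₀, hu₀, rfl⟩, hfne u₀ hu₀, ?_⟩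
        intro Y hY
        refine Set.eq_empty_iff_forall_notMem.2 ?_
        rintro w ⟨hw1, hw2⟩
        have hwz : w < z Y := lt_of_le_of_lt (hsub hw1) (lt_of_lt_of_le hx (hmin Y hY))
        exact (Set.eq_empty_iff_forall_notMem.1 (hzspec Y hY) w) ⟨hw2, hwz⟩
      · -- R1 proper and nonempty
        obtain ⟨c, hIoi, hIci⟩ :=
          upward_struct hM hR1d hR1up (Set.nonempty_iff_ne_empty.2 hR1e) hR1u
        have hnosmall : ∀ y, y < c → ∀ u ∈ Ω, ¬ famFiber₁ D u ⊆ Set.Iic y := by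
          intro y hy u hu hsub
          exact absurd (hIci ⟨u, hu, hsub⟩) (not_le.2 hy)
        by_cases hc1 : c ∈ R1
        · by_cases hc2 : ∃ u ∈ Ω, famFiber₁ D u ⊆ Set.Iio c
          · -- the type c⁻
            obtain ⟨u₀, hu₀, hsubX₀⟩ := hc2
            have key : ∀ Y ∈ famFiber₁ D '' Ω, (Y ∩ famFiber₁ D u₀).Nonempty →
                Y ∈ pLtT L c := by
              rintro Y hY ⟨p, hpY, hpX₀⟩
              have hpc : p < c := hsubX₀ hpX₀
              obtain ⟨u, hu, hYeq⟩ := id hY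
              refine ⟨hYeq ▸ fiber_definable hD u, p, hpc, fun x hx => ?_⟩
              obtain ⟨w, hwY, hwx⟩ := Set.not_subset.1 (hYeq ▸ hnosmall x hx.2 u hu)
              exact (hconv Y hY).out hpY hwY ⟨le_of_lt hx.1, le_of_lt (not_le.1 hwx)⟩
            have hX₀S : famFiber₁ D u₀ ∈ famFiber₁ D '' Ω := ⟨u₀, hu₀, rfl⟩
            have hX₀q : famFiber₁ D u₀ ∈ pLtT L c :=
              key _ hX₀S (by rw [Set.inter_self]; exact hfne u₀ hu₀)
            refine ⟨pLtT L c, ⟨isTypeOn_pLt hM c, isDefTypeOver_pLt hlt c⟩,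
              pick_pLt hlt hD c, ?_⟩
            refine insert_bound hbound ?_
            intro F hF _ _
            refine ⟨famFiber₁ D u₀, hX₀S, hfne u₀ hu₀, ?_⟩
            intro Y hY
            by_contra h
            have hne : (Y ∩ famFiber₁ D u₀).Nonempty := by
              rw [Set.inter_comm]
              exact Set.nonempty_iff_ne_empty.2 h
            exact (hF hY).2 (key Y (hF hY).1 hne)
          · -- the realized type at c
            obtain ⟨u₀, hu₀, hsubX₀⟩ := hc1
            have hcX₀ : c ∈ famFiber₁ D u₀ := by
              have hnot : ¬ famFiber₁ D u₀ ⊆ Set.Iio c := fun h => hc2 ⟨u₀, hu₀, h⟩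
              obtain ⟨w, hwX, hwlt⟩ := Set.not_subset.1 hnot
              have : w = c := le_antisymm (hsubX₀ hwX) (not_lt.1 hwlt)
              exact this ▸ hwX
            have key : ∀ Y ∈ famFiber₁ D '' Ω, (Y ∩ famFiber₁ D u₀).Nonempty →
                Y ∈ pPtT L c := by
              rintro Y hY ⟨p, hpY, hpX₀⟩
              have hpc : p ≤ c := hsubX₀ hpX₀
              obtain ⟨u, hu, hYeq⟩ := id hY
              have hnot : ¬ Y ⊆ Set.Iio c := fun h => hc2 ⟨u, hu, hYeq ▸ h⟩
              obtain ⟨w, hwY, hwlt⟩ := Set.not_subset.1 hnot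
              refine ⟨hYeq ▸ fiber_definable hD u, ?_⟩
              exact (hconv Y hY).out hpY hwY ⟨hpc, not_lt.1 hwlt⟩
            have hX₀S : famFiber₁ D u₀ ∈ famFiber₁ D '' Ω := ⟨u₀, hu₀, rfl⟩
            refine ⟨pPtT L c, ⟨isTypeOn_pPt hM c, isDefTypeOver_pPt c⟩,
              pick_pPt hD c, ?_⟩
            refine insert_bound hbound ?_
            intro F hF _ _
            refine ⟨famFiber₁ D u₀, hX₀S, hfne u₀ hu₀, ?_⟩
            intro Y hY
            by_contra h
            have hne : (Y ∩ famFiber₁ D u₀).Nonempty := by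
              rw [Set.inter_comm]
              exact Set.nonempty_iff_ne_empty.2 h
            exact (hF hY).2 (key Y (hF hY).1 hne)
        · -- the type c⁺
          have hnoc : ∀ u ∈ Ω, ¬ famFiber₁ D u ⊆ Set.Iic c := fun u hu h => hc1 ⟨u, hu, h⟩
          refine ⟨pGtT L c, ⟨isTypeOn_pGt hM c, isDefTypeOver_pGt hlt c⟩,
            pick_pGt hlt hD c, ?_⟩
          refine insert_bound hbound ?_
          intro F hF hFne _
          have hz : ∀ Y ∈ F, ∃ zz, c < zz ∧ Y ∩ Set.Iio zz = ∅ := by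
            intro Y hY
            have hY' := hF hY
            obtain ⟨u, hu, hYeq⟩ := hY'.1
            obtain ⟨y₀, hy₀Y, hy₀c⟩ : ∃ y₀ ∈ Y, c < y₀ := by
              obtain ⟨w, hw1, hw2⟩ := Set.not_subset.1 (hYeq ▸ hnoc u hu)
              exact ⟨w, hw1, not_le.1 hw2⟩
            have hnot : ¬ Set.Ioo c y₀ ⊆ Y := by
              intro hsub
              exact hY'.2 ⟨hYeq ▸ fiber_definable hD u, y₀, hy₀c, hsub⟩
            obtain ⟨zz, hzz, hzzY⟩ := Set.not_subset.1 hnot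
            refine ⟨zz, hzz.1, Set.eq_empty_iff_forall_notMem.2 ?_⟩
            rintro w ⟨hwY, hwz⟩
            exact hzzY ((hconv Y hY'.1).out hwY hy₀Y ⟨le_of_lt hwz, le_of_lt hzz.2⟩)
          choose! zz hzz1 hzz2 using hz
          obtain ⟨Ym, hYm, hmin⟩ := Finset.exists_min_image F zz hFne
          obtain ⟨x, hx1, hx2⟩ := exists_between (hzz1 Ym hYm)
          obtain ⟨u₀, hu₀, hsub⟩ : x ∈ R1 := hIoi hx1
          refine ⟨famFiber₁ D u₀, ⟨u₀, hu₀, rfl⟩, hfne u₀ hu₀, ?_⟩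
          intro Y hY
          refine Set.eq_empty_iff_forall_notMem.2 ?_
          rintro w ⟨hw1, hw2⟩
          have hwz : w < zz Y := lt_of_le_of_lt (hsub hw1) (lt_of_lt_of_le hx2 (hmin Y hY))
          exact (Set.eq_empty_iff_forall_notMem.1 (hzz2 Y hY) w) ⟨hw2, hwz⟩
end St11
/-- a definable family of nonempty intervals in `M`, whose maximal pairwise
disjoint subfamilies have size `k`, is covered by `k` subfamilies each extending to a
definable type. -/
theorem statement11 (L : FirstOrder.Language) (M : Type*) [L.Structure M] [LinearOrder M]
    (hM : IsOMinimal L M) (S : Set (Set M)) (hS : IsDefFamily₁ L (Set.univ : Set M) S)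
    (hint : ∀ X ∈ S, X.Nonempty ∧ IsPointOrInterval X)
    (k : ℕ) (hk : 1 ≤ k)
    (hmax : ∃ F : Finset (Set M), ↑F ⊆ S ∧ F.card = k ∧
      (↑F : Set (Set M)).Pairwise fun X Y => X ∩ Y = ∅)
    (hbound : ∀ F : Finset (Set M), ↑F ⊆ S →
      ((↑F : Set (Set M)).Pairwise fun X Y => X ∩ Y = ∅) → F.card ≤ k) :
    ∃ p : Fin k → Set (Set M),
      (∀ i, IsTypeOn₁ L (p i) ∧ IsDefTypeOver₁ L (Set.univ : Set M) (p i)) ∧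
      ∀ X ∈ S, ∃ i, X ∈ p i := by
  obtain ⟨p, hp, hcov⟩ := St11.main_ind hM k S hS hint hbound
  exact ⟨p, hp, hcov⟩
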